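/- Let f, g : ℝ^p × ℝ^q → ℝ be twice continuously differentiable and let μ > 0 be such that for every x ∈ ℝ^p the function y ↦ g(x,y) is μ-strongly convex; let y*(x) denote its unique minimizer. Then the function Φ(x) := f(x, y*(x)) is differentiable on ℝ^p and, for every x, ∇Φ(x) = ∇_x f(x, y*(x)) − ∇_x∇_y g(x, y*(x)) · v*(x), where v*(x) is the unique solution of the linear system ∇²_y g(x, y*(x)) v = ∇_y f(x, y*(x)) in ℝ^q (the Hessian is invertible because ∇²_y g(x, y*(x)) ⪰ μI by strong convexity). -/

import Mathlib

open scoped RealInnerProductSpace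

noncomputable section

abbrev Euc (n : ℕ) : Type := EuclideanSpace ℝ (Fin n)

variable {p q : ℕ}

/-- The partial gradient `∇ₓ f(x,y)`. -/
noncomputable def gradX (f : Euc p × Euc q → ℝ) (x : Euc p) (y : Euc q) : Euc p :=
  gradient (fun x' => f (x', y)) x

/-- The partial gradient `∇_y f(x,y)`. -/
noncomputable def gradY (f : Euc p × Euc q → ℝ) (x : Euc p) (y : Euc q) : Euc q :=
  gradient (fun y' => f (x, y')) y

/-- The Hessian `∇²_y g(x,y)` of `y ↦ g(x,y)`, as a continuous linear map. -/
noncomputable def hessY (g : Euc p × Euc q → ℝ) (x : Euc p) (y : Euc q) :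
    Euc q →L[ℝ] Euc q :=
  fderiv ℝ (fun y' => gradY g x y') y

/-- The Fréchet derivative in `x` of `x ↦ ∇_y g(x,y)`; the paper's mixed second
derivative matrix `∇ₓ∇_y g(x,y)` is its adjoint. -/
noncomputable def mixXY (g : Euc p × Euc q → ℝ) (x : Euc p) (y : Euc q) :
    Euc p →L[ℝ] Euc q :=
  fderiv ℝ (fun x' => gradY g x' y) x

namespace HGAux

open InnerProductSpace ContinuousLinearMap

lemma hasFDerivAt_partialY (g : Euc p × Euc q → ℝ) (x : Euc p) (y : Euc q)
    (hg : DifferentiableAt ℝ g (x, y)) :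
    HasFDerivAt (fun y' => g (x, y'))
      ((fderiv ℝ g (x, y)).comp (ContinuousLinearMap.inr ℝ (Euc p) (Euc q))) y :=
  hg.hasFDerivAt.comp y (hasFDerivAt_prodMk_right x y)

lemma hasFDerivAt_partialX (g : Euc p × Euc q → ℝ) (x : Euc p) (y : Euc q)
    (hg : DifferentiableAt ℝ g (x, y)) :
    HasFDerivAt (fun x' => g (x', y))
      ((fderiv ℝ g (x, y)).comp (ContinuousLinearMap.inl ℝ (Euc p) (Euc q))) x :=
  hg.hasFDerivAt.comp x (hasFDerivAt_prodMk_left x y)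

lemma gradY_eq (g : Euc p × Euc q → ℝ) (x : Euc p) (y : Euc q)
    (hg : DifferentiableAt ℝ g (x, y)) :
    gradY g x y = (toDual ℝ (Euc q)).symm
      ((fderiv ℝ g (x, y)).comp (ContinuousLinearMap.inr ℝ (Euc p) (Euc q))) := by
  rw [gradY, gradient, (hasFDerivAt_partialY g x y hg).fderiv]

lemma gradX_eq (g : Euc p × Euc q → ℝ) (x : Euc p) (y : Euc q)
    (hg : DifferentiableAt ℝ g (x, y)) :
    gradX g x y = (toDual ℝ (Euc p)).symm
      ((fderiv ℝ g (x, y)).comp (ContinuousLinearMap.inl ℝ (Euc p) (Euc q))) := by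
  rw [gradX, gradient, (hasFDerivAt_partialX g x y hg).fderiv]

lemma inner_gradY (g : Euc p × Euc q → ℝ) (x : Euc p) (y : Euc q)
    (hg : DifferentiableAt ℝ g (x, y)) (w : Euc q) :
    ⟪gradY g x y, w⟫ = fderiv ℝ g (x, y) (0, w) := by
  rw [gradY_eq g x y hg, toDual_symm_apply]
  simp

lemma inner_gradX (g : Euc p × Euc q → ℝ) (x : Euc p) (y : Euc q)
    (hg : DifferentiableAt ℝ g (x, y)) (u : Euc p) :
    ⟪gradX g x y, u⟫ = fderiv ℝ g (x, y) (u, 0) := by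
  rw [gradX_eq g x y hg, toDual_symm_apply]
  simp

end HGAux

set_option maxHeartbeats 4000000

/-- Proposition 2.1: the hypergradient formula.  If `g(x,·)` is
`μ`-strongly convex with minimizer `y*(x)`, then `Φ(x) = f(x, y*(x))` is differentiable
and `∇Φ(x) = ∇ₓ f(x,y*(x)) − ∇ₓ∇_y g(x,y*(x)) v*(x)`, where `v*(x)` is the unique
solution of `∇²_y g(x,y*(x)) v = ∇_y f(x,y*(x))`. -/
theorem hypergradient_formula (p q : ℕ) (f g : Euc p × Euc q → ℝ) (μ : ℝ) (hμ : 0 < μ)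
    (hf : ContDiff ℝ 2 f) (hg : ContDiff ℝ 2 g)
    (hsc : ∀ (x : Euc p) (y y' : Euc q),
      g (x, y) + ⟪gradY g x y, y' - y⟫ + μ / 2 * ‖y' - y‖ ^ 2 ≤ g (x, y'))
    (ystar : Euc p → Euc q) (hmin : ∀ x y, g (x, ystar x) ≤ g (x, y)) :
    Differentiable ℝ (fun x => f (x, ystar x)) ∧
    (∀ x, ∃! v : Euc q, (hessY g x (ystar x)) v = gradY f x (ystar x)) ∧
    (∀ (x : Euc p) (v : Euc q), (hessY g x (ystar x)) v = gradY f x (ystar x) →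
      gradient (fun x' => f (x', ystar x')) x =
        gradX f x (ystar x) - (ContinuousLinearMap.adjoint (mixXY g x (ystar x))) v) := by
  classical
  have hgd : Differentiable ℝ g := hg.differentiable two_ne_zero
  have hfd : Differentiable ℝ f := hf.differentiable two_ne_zero
  set GY : Euc p × Euc q → Euc q := fun z =>
    (InnerProductSpace.toDual ℝ (Euc q)).symm
      ((fderiv ℝ g z).comp (ContinuousLinearMap.inr ℝ (Euc p) (Euc q))) with hGYdef
  have hGYeq : ∀ (x : Euc p) (y : Euc q), gradY g x y = GY (x, y) := fun x y =>
    HGAux.gradY_eq g x y (hgd _)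
  have hGY1 : ContDiff ℝ 1 GY := by
    have hfd2 : ContDiff ℝ 1 (fderiv ℝ g) := hg.fderiv_right (by norm_num)
    have h2 : ContDiff ℝ 1 fun z : Euc p × Euc q =>
        (fderiv ℝ g z).comp (ContinuousLinearMap.inr ℝ (Euc p) (Euc q)) :=
      hfd2.clm_comp contDiff_const
    exact ((InnerProductSpace.toDual ℝ (Euc q)).symm.contDiff).comp h2
  have hGYd : Differentiable ℝ GY := hGY1.differentiable one_ne_zero
  have hessY_eq : ∀ (x : Euc p) (y : Euc q),
      hessY g x y = (fderiv ℝ GY (x, y)).comp (ContinuousLinearMap.inr ℝ (Euc p) (Euc q)) := by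
    intro x y
    have h1 : HasFDerivAt (fun y' => GY (x, y'))
        ((fderiv ℝ GY (x, y)).comp (ContinuousLinearMap.inr ℝ (Euc p) (Euc q))) y :=
      (hGYd (x, y)).hasFDerivAt.comp y (hasFDerivAt_prodMk_right x y)
    have h2 : (fun y' => gradY g x y') = fun y' => GY (x, y') := funext fun y' => hGYeq x y'
    rw [hessY, h2, h1.fderiv]
  have mixXY_eq : ∀ (x : Euc p) (y : Euc q),
      mixXY g x y = (fderiv ℝ GY (x, y)).comp (ContinuousLinearMap.inl ℝ (Euc p) (Euc q)) := by
    intro x y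
    have h1 : HasFDerivAt (fun x' => GY (x', y))
        ((fderiv ℝ GY (x, y)).comp (ContinuousLinearMap.inl ℝ (Euc p) (Euc q))) x :=
      by have h := (hGYd (x, y)).hasFDerivAt.comp x (hasFDerivAt_prodMk_left (𝕜 := ℝ) x y); exact h
    have h2 : (fun x' => gradY g x' y) = fun x' => GY (x', y) := funext fun x' => hGYeq x' y
    rw [mixXY, h2, h1.fderiv]
  have hmono : ∀ (x : Euc p) (y y' : Euc q),
      μ * ‖y' - y‖ ^ 2 ≤ ⟪GY (x, y') - GY (x, y), y' - y⟫ := by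
    intro x y y'
    rw [← hGYeq, ← hGYeq]
    have h1 := hsc x y y'
    have h2 := hsc x y' y
    rw [norm_sub_rev y y'] at h2
    have e2 : ⟪gradY g x y', y - y'⟫ = -⟪gradY g x y', y' - y⟫ := by
      rw [show y - y' = -(y' - y) by abel, inner_neg_right]
    rw [e2] at h2
    have e1 : ⟪gradY g x y' - gradY g x y, y' - y⟫
        = ⟪gradY g x y', y' - y⟫ - ⟪gradY g x y, y' - y⟫ := inner_sub_left _ _ _
    rw [e1]
    linarith
  have hz : ∀ x, GY (x, ystar x) = 0 := by
    intro x
    have hm : IsLocalMin (fun y => g (x, y)) (ystar x) := Filter.Eventually.of_forall (hmin x)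
    have h0 := hm.hasFDerivAt_eq_zero (HGAux.hasFDerivAt_partialY g x (ystar x) (hgd _))
    simp only [hGYdef, h0, map_zero]
  have hcoer : ∀ (x : Euc p) (y : Euc q) (v : Euc q), μ * ‖v‖ ^ 2 ≤ ⟪hessY g x y v, v⟫ := by
    intro x y v
    set c : ℝ → Euc q := fun t => GY (x, y + t • v) with hc_def
    have hc : HasDerivAt c (hessY g x y v) 0 := by
      have h1 : HasDerivAt (fun t : ℝ => y + t • v) v 0 := by
        simpa using (((hasDerivAt_id (0 : ℝ)).smul_const v).const_add y)
      have h2 : HasDerivAt (fun t : ℝ => ((x, y + t • v) : Euc p × Euc q))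
          (((0 : Euc p), v)) 0 := (hasDerivAt_const 0 x).prodMk h1
      have h3 : HasFDerivAt GY (fderiv ℝ GY (x, y)) ((x : Euc p), y + (0:ℝ) • v) := by
        simpa using (hGYd (x, y)).hasFDerivAt
      have h4 := h3.comp_hasDerivAt 0 h2
      have h5 : fderiv ℝ GY (x, y) ((0 : Euc p), v) = hessY g x y v := by
        rw [hessY_eq]; rfl
      rw [← h5]
      exact h4
    have hslope := hasDerivAt_iff_tendsto_slope.mp hc
    have hsub : Filter.Tendsto (slope c 0) (nhdsWithin 0 (Set.Ioi 0)) (nhds (hessY g x y v)) :=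
      hslope.mono_left (nhdsWithin_mono _ (fun t ht => ne_of_gt ht))
    have hinner : Filter.Tendsto (fun t => ⟪slope c 0 t, v⟫) (nhdsWithin 0 (Set.Ioi 0))
        (nhds ⟪hessY g x y v, v⟫) := hsub.inner tendsto_const_nhds
    refine ge_of_tendsto hinner ?_
    filter_upwards [self_mem_nhdsWithin] with t ht
    have ht' : (0 : ℝ) < t := ht
    have hm := hmono x y (y + t • v)
    have hsimp : y + t • v - y = t • v := by abel
    rw [hsimp] at hm
    have hnorm : ‖t • v‖ = t * ‖v‖ := by
      rw [norm_smul, Real.norm_eq_abs, abs_of_pos ht']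
    rw [hnorm] at hm
    have hslope_val : slope c 0 t = t⁻¹ • (c t - c 0) := by
      rw [slope_def_module]; ring_nf
    have hc0 : c 0 = GY (x, y) := by simp [hc_def]
    have hIP : ⟪GY (x, y + t • v) - GY (x, y), t • v⟫
        = t * ⟪GY (x, y + t • v) - GY (x, y), v⟫ := real_inner_smul_right _ _ _
    rw [hIP] at hm
    have key : μ * (t * ‖v‖) ^ 2 ≤ t * ⟪GY (x, y + t • v) - GY (x, y), v⟫ := hm
    rw [hslope_val, real_inner_smul_left]
    have h6 : t * (μ * ‖v‖ ^ 2) ≤ ⟪GY (x, y + t • v) - GY (x, y), v⟫ := by nlinarith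
    have hct : c t - c 0 = GY (x, y + t • v) - GY (x, y) := by simp [hc_def]
    rw [hct]
    calc μ * ‖v‖ ^ 2 = t⁻¹ * (t * (μ * ‖v‖ ^ 2)) := by field_simp
      _ ≤ t⁻¹ * ⟪GY (x, y + t • v) - GY (x, y), v⟫ := by
          apply mul_le_mul_of_nonneg_left h6 (le_of_lt (inv_pos.mpr ht'))
  have hinj : ∀ (x : Euc p) (y : Euc q), Function.Injective (hessY g x y) := by
    intro x y a b hab
    have h := hcoer x y (a - b)
    rw [map_sub, hab, sub_self, inner_zero_left] at h
    have h2 : ‖a - b‖ ^ 2 = 0 := le_antisymm (by nlinarith) (sq_nonneg _)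
    have h3 : a - b = 0 := by
      rw [pow_eq_zero_iff (two_ne_zero)] at h2
      exact norm_eq_zero.mp h2
    exact sub_eq_zero.mp h3
  have hsymm : ∀ (x : Euc p) (y : Euc q) (a b : Euc q),
      ⟪hessY g x y a, b⟫ = ⟪a, hessY g x y b⟫ := by
    intro x y a b
    have hh : ContDiff ℝ 2 (fun y' => g (x, y')) := hg.comp (contDiff_const.prodMk contDiff_id)
    have hh1 : ContDiff ℝ 1 (fderiv ℝ (fun y' => g (x, y'))) := hh.fderiv_right (by norm_num)
    set f'' := fderiv ℝ (fderiv ℝ (fun y' => g (x, y'))) y with hf''def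
    have hf'' : HasFDerivAt (fderiv ℝ (fun y' => g (x, y'))) f'' y :=
      (hh1.differentiable one_ne_zero y).hasFDerivAt
    have hsym := second_derivative_symmetric
      (f := fun y' => g (x, y')) (f' := fderiv ℝ (fun y' => g (x, y')))
      (fun z => (hh.differentiable two_ne_zero z).hasFDerivAt) hf''
    have hgradH : HasFDerivAt (fun y' => gradY g x y') (hessY g x y) y := by
      have h1 : HasFDerivAt (fun y' => GY (x, y'))
          ((fderiv ℝ GY (x, y)).comp (ContinuousLinearMap.inr ℝ (Euc p) (Euc q))) y :=
        (hGYd (x, y)).hasFDerivAt.comp y (hasFDerivAt_prodMk_right x y)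
      rw [hessY_eq]
      exact h1.congr_of_eventuallyEq (Filter.Eventually.of_forall fun y' => hGYeq x y')
    have hinner1 : ∀ (y' w : Euc q),
        ⟪gradY g x y', w⟫ = fderiv ℝ (fun y'' => g (x, y'')) y' w := by
      intro y' w
      rw [gradY, gradient, InnerProductSpace.toDual_symm_apply]
    have key : ∀ c d : Euc q, ⟪d, hessY g x y c⟫ = f'' c d := by
      intro c d
      have h1 : HasFDerivAt (fun y' => (⟪d, gradY g x y'⟫ : ℝ))
          ((innerSL ℝ d).comp (hessY g x y)) y := (innerSL ℝ d).hasFDerivAt.comp y hgradH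
      have h2 : HasFDerivAt (fun y' => fderiv ℝ (fun y'' => g (x, y'')) y' d)
          ((ContinuousLinearMap.apply ℝ ℝ d).comp f'') y :=
        (ContinuousLinearMap.apply ℝ ℝ d).hasFDerivAt.comp y hf''
      have heq : (fun y' => (⟪d, gradY g x y'⟫ : ℝ))
          = fun y' => fderiv ℝ (fun y'' => g (x, y'')) y' d := by
        funext y'
        rw [real_inner_comm, hinner1]
      rw [heq] at h1
      have huniq := h1.unique h2
      have happ := congrArg (fun (L : Euc q →L[ℝ] ℝ) => L c) huniq
      simpa using happ
    calc ⟪hessY g x y a, b⟫ = ⟪b, hessY g x y a⟫ := real_inner_comm _ _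
      _ = f'' a b := key a b
      _ = f'' b a := hsym a b
      _ = ⟪a, hessY g x y b⟫ := (key b a).symm
  have main : ∀ x₀ : Euc p, ∃ D : Euc p →L[ℝ] Euc q, HasFDerivAt ystar D x₀ ∧
      ∀ u, hessY g x₀ (ystar x₀) (D u) = -(mixXY g x₀ (ystar x₀) u) := by
    intro x₀
    set y₀ := ystar x₀ with hy₀def
    have hz₀ : GY (x₀, y₀) = 0 := hz x₀
    set DG := fderiv ℝ GY (x₀, y₀) with hDGdef
    have hHM : ∀ (u : Euc p) (w : Euc q), DG (u, w) = mixXY g x₀ y₀ u + hessY g x₀ y₀ w := by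
      intro u w
      have hsplit : ((u, w) : Euc p × Euc q) = (u, 0) + (0, w) := by simp
      rw [hsplit, map_add, mixXY_eq, hessY_eq]
      rfl
    have hinj' : Function.Injective ((hessY g x₀ y₀ : Euc q →ₗ[ℝ] Euc q)) := hinj x₀ y₀
    have hHbij : Function.Bijective ((hessY g x₀ y₀ : Euc q →ₗ[ℝ] Euc q)) :=
      ⟨hinj', LinearMap.injective_iff_surjective.mp hinj'⟩
    let Heq : Euc q ≃L[ℝ] Euc q :=
      (LinearEquiv.ofBijective (hessY g x₀ y₀ : Euc q →ₗ[ℝ] Euc q)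
        hHbij).toContinuousLinearEquiv
    have hHeq : ∀ w, Heq w = hessY g x₀ y₀ w := fun w => rfl
    let A : (Euc p × Euc q) →L[ℝ] (Euc p × Euc q) :=
      (ContinuousLinearMap.fst ℝ (Euc p) (Euc q)).prod DG
    let B : (Euc p × Euc q) →L[ℝ] (Euc p × Euc q) :=
      (ContinuousLinearMap.fst ℝ (Euc p) (Euc q)).prod
        ((Heq.symm : Euc q →L[ℝ] Euc q).comp
          (ContinuousLinearMap.snd ℝ (Euc p) (Euc q)
            - (mixXY g x₀ y₀).comp (ContinuousLinearMap.fst ℝ (Euc p) (Euc q))))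
    have hA : ∀ z : Euc p × Euc q, A z = (z.1, DG z) := fun z => rfl
    have hB : ∀ z : Euc p × Euc q, B z = (z.1, Heq.symm (z.2 - mixXY g x₀ y₀ z.1)) :=
      fun z => rfl
    have hBA : Function.LeftInverse B A := by
      intro z
      obtain ⟨u, w⟩ := z
      rw [hA, hB]
      have h3 : DG (u, w) - mixXY g x₀ y₀ u = hessY g x₀ y₀ w := by
        rw [hHM u w]; abel
      simp only [h3]
      rw [← hHeq, Heq.symm_apply_apply]
    have hAB : Function.RightInverse B A := by
      intro z
      obtain ⟨u, w⟩ := z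
      rw [hB, hA]
      have h3 : DG (u, Heq.symm (w - mixXY g x₀ y₀ u)) = w := by
        rw [hHM]
        have h4 : hessY g x₀ y₀ (Heq.symm (w - mixXY g x₀ y₀ u))
            = w - mixXY g x₀ y₀ u := by
          rw [← hHeq, Heq.apply_symm_apply]
        rw [h4]; abel
      simp only [h3]
    let E : (Euc p × Euc q) ≃L[ℝ] (Euc p × Euc q) :=
      ContinuousLinearEquiv.equivOfInverse A B hBA hAB
    have hE : (E : (Euc p × Euc q) →L[ℝ] (Euc p × Euc q)) = A := rfl
    have hFA : HasFDerivAt (fun z : Euc p × Euc q => (z.1, GY z)) A (x₀, y₀) :=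
      hasFDerivAt_fst.prodMk (hGYd (x₀, y₀)).hasFDerivAt
    have hFstrict : HasStrictFDerivAt (fun z : Euc p × Euc q => (z.1, GY z))
        (E : (Euc p × Euc q) →L[ℝ] (Euc p × Euc q)) (x₀, y₀) := by
      have hc : ContDiffAt ℝ 1 (fun z : Euc p × Euc q => (z.1, GY z)) (x₀, y₀) :=
        (contDiff_fst.prodMk hGY1).contDiffAt
      have h := hc.hasStrictFDerivAt one_ne_zero
      rwa [hFA.fderiv, ← hE] at h
    set linv := hFstrict.localInverse (fun z : Euc p × Euc q => (z.1, GY z)) E (x₀, y₀)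
      with hlinvdef
    have hys_cont : Filter.Tendsto ystar (nhds x₀) (nhds y₀) := by
      have hb : ∀ x', ‖ystar x' - y₀‖ ≤ μ⁻¹ * ‖GY (x', y₀)‖ := by
        intro x'
        have h1 := hmono x' (ystar x') y₀
        rw [hz x', sub_zero] at h1
        have h2 := real_inner_le_norm (GY (x', y₀)) (y₀ - ystar x')
        have h3 : ‖ystar x' - y₀‖ = ‖y₀ - ystar x'‖ := norm_sub_rev _ _
        rw [h3]
        rcases eq_or_lt_of_le (norm_nonneg (y₀ - ystar x')) with hzero | hpos
        · rw [← hzero]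
          positivity
        · have h4 : μ * ‖y₀ - ystar x'‖ ≤ ‖GY (x', y₀)‖ := by nlinarith
          calc ‖y₀ - ystar x'‖ = μ⁻¹ * (μ * ‖y₀ - ystar x'‖) := by field_simp
            _ ≤ μ⁻¹ * ‖GY (x', y₀)‖ :=
                mul_le_mul_of_nonneg_left h4 (by positivity)
      have hlim : Filter.Tendsto (fun x' => μ⁻¹ * ‖GY (x', y₀)‖) (nhds x₀) (nhds 0) := by
        have hc : Continuous fun x' : Euc p => GY (x', y₀) :=
          hGY1.continuous.comp (continuous_id.prodMk continuous_const)
        have h5 := (hc.tendsto x₀).norm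
        rw [hz₀, norm_zero] at h5
        simpa using h5.const_mul μ⁻¹
      rw [tendsto_iff_norm_sub_tendsto_zero]
      exact squeeze_zero (fun _ => norm_nonneg _) hb hlim
    have hγ : Filter.Tendsto (fun x' => ((x', ystar x') : Euc p × Euc q)) (nhds x₀)
        (nhds ((x₀, y₀) : Euc p × Euc q)) :=
      Filter.Tendsto.prodMk_nhds Filter.tendsto_id hys_cont
    have hev : ∀ᶠ x' in nhds x₀, linv (x', 0) = (x', ystar x') := by
      have h1 := hFstrict.eventually_left_inverse
      filter_upwards [hγ.eventually h1] with x' hx'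
      have h2 : ((((x' : Euc p), ystar x').1, GY (x', ystar x')) : Euc p × Euc q)
          = ((x', 0) : Euc p × Euc q) := by rw [hz x']
      rw [h2] at hx'
      exact hx'
    have hψ : HasStrictFDerivAt linv
        (E.symm : (Euc p × Euc q) →L[ℝ] (Euc p × Euc q)) ((x₀, 0) : Euc p × Euc q) := by
      have h := hFstrict.to_localInverse
      have h2 : ((((x₀ : Euc p), (y₀ : Euc q)).1, GY (x₀, y₀)) : Euc p × Euc q)
          = ((x₀, 0) : Euc p × Euc q) := by rw [hz₀]
      rwa [h2] at h
    set D : Euc p →L[ℝ] Euc q :=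
      (ContinuousLinearMap.snd ℝ (Euc p) (Euc q)).comp
        ((E.symm : (Euc p × Euc q) →L[ℝ] (Euc p × Euc q)).comp
          (ContinuousLinearMap.inl ℝ (Euc p) (Euc q))) with hDdef
    have hψ' : HasFDerivAt (fun x' => (linv (x', 0)).2) D x₀ := by
      have h1 := hψ.hasFDerivAt.comp x₀ (hasFDerivAt_prodMk_left (𝕜 := ℝ) x₀ (0 : Euc q))
      exact hasFDerivAt_snd.comp x₀ h1
    have hD : HasFDerivAt ystar D x₀ :=
      hψ'.congr_of_eventuallyEq (hev.mono fun x' hx' => by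
        show ystar x' = (linv (x', 0)).2
        rw [hx'])
    have hcomp : HasFDerivAt (fun x' => GY (x', ystar x'))
        (DG.comp ((ContinuousLinearMap.id ℝ (Euc p)).prod D)) x₀ :=
      by have h := (hGYd (x₀, y₀)).hasFDerivAt.comp x₀ ((hasFDerivAt_id (𝕜 := ℝ) x₀).prodMk hD); exact h
    have hfun0 : (fun x' => GY (x', ystar x')) = fun _ => (0 : Euc q) := funext hz
    rw [hfun0] at hcomp
    have h0 : DG.comp ((ContinuousLinearMap.id ℝ (Euc p)).prod D) = 0 :=
      hcomp.unique (hasFDerivAt_const 0 x₀)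
    refine ⟨D, hD, fun u => ?_⟩
    have h1 : DG (u, D u) = 0 := by
      have h2 := congrArg (fun (L : Euc p →L[ℝ] Euc q) => L u) h0
      simpa using h2
    rw [hHM u (D u)] at h1
    exact eq_neg_of_add_eq_zero_right h1
  refine ⟨?_, ?_, ?_⟩
  · intro x₀
    obtain ⟨D, hD, -⟩ := main x₀
    exact ((hfd (x₀, ystar x₀)).hasFDerivAt.comp x₀
      ((hasFDerivAt_id x₀).prodMk hD)).differentiableAt
  · intro x
    have hs : Function.Surjective (hessY g x (ystar x)) := by
      have h1 : Function.Injective ((hessY g x (ystar x)) :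
          Euc q →ₗ[ℝ] Euc q) := hinj x (ystar x)
      exact LinearMap.injective_iff_surjective.mp h1
    obtain ⟨v, hv⟩ := hs (gradY f x (ystar x))
    exact ⟨v, hv, fun w hw => hinj x (ystar x) (hw.trans hv.symm)⟩
  · intro x v hv
    obtain ⟨D, hD, hHD⟩ := main x
    have hΦ : HasFDerivAt (fun x' => f (x', ystar x'))
        ((fderiv ℝ f (x, ystar x)).comp
          ((ContinuousLinearMap.id ℝ (Euc p)).prod D)) x :=
      (hfd (x, ystar x)).hasFDerivAt.comp x ((hasFDerivAt_id x).prodMk hD)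
    have hgrad : HasGradientAt (fun x' => f (x', ystar x'))
        (gradX f x (ystar x) - (ContinuousLinearMap.adjoint (mixXY g x (ystar x))) v) x := by
      rw [hasGradientAt_iff_hasFDerivAt]
      refine hΦ.congr_fderiv ?_
      symm
      apply ContinuousLinearMap.ext
      intro u
      rw [InnerProductSpace.toDual_apply_apply]
      have h1 : ⟪gradX f x (ystar x), u⟫ = fderiv ℝ f (x, ystar x) (u, 0) :=
        HGAux.inner_gradX f x (ystar x) (hfd _) u
      have h2 : ⟪gradY f x (ystar x), D u⟫ = fderiv ℝ f (x, ystar x) (0, D u) :=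
        HGAux.inner_gradY f x (ystar x) (hfd _) (D u)
      have h3 : ⟪gradY f x (ystar x), D u⟫
          = -⟪(ContinuousLinearMap.adjoint (mixXY g x (ystar x))) v, u⟫ := by
        rw [ContinuousLinearMap.adjoint_inner_left, ← hv, hsymm x (ystar x) v (D u), hHD u]
        rw [inner_neg_right]
      have h4 : fderiv ℝ f (x, ystar x) (u, 0) + fderiv ℝ f (x, ystar x) (0, D u)
          = fderiv ℝ f (x, ystar x) (u, D u) := by
        rw [← map_add]
        norm_num
      calc ⟪gradX f x (ystar x) - (ContinuousLinearMap.adjoint (mixXY g x (ystar x))) v, u⟫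
          = ⟪gradX f x (ystar x), u⟫
            - ⟪(ContinuousLinearMap.adjoint (mixXY g x (ystar x))) v, u⟫ :=
            inner_sub_left _ _ _
        _ = fderiv ℝ f (x, ystar x) (u, 0) + ⟪gradY f x (ystar x), D u⟫ := by
            rw [h1, h3]; ring
        _ = fderiv ℝ f (x, ystar x) (u, D u) := by rw [h2, h4]
        _ = ((fderiv ℝ f (x, ystar x)).comp
              ((ContinuousLinearMap.id ℝ (Euc p)).prod D)) u := rfl
    exact hgrad.gradient
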